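/- Let $E$ be a finite-dimensional real inner product space, let $L : E \to \mathbb{R}$ be differentiable, let $H : E \to E$ be a self-adjoint continuous linear map, and let $\lambda \in \mathbb{R}$. Let $\theta_k : E \to E$ be a differentiable map (sending an initialization $\theta_0$ to the adapted parameters $\theta_k(\theta_0)$) such that the inner-loop first-order optimality condition $\nabla L(\theta_k(\theta_0)) + \lambda\, H^2\big(\theta_k(\theta_0) - \theta_0\big) = 0$ holds for every $\theta_0 \in E$, where $H^2 = H \circ H$. Then the meta-objective $F : E \to \mathbb{R}$ defined by $F(\theta_0) = L(\theta_k(\theta_0)) + \tfrac{\lambda}{2}\big\|H\big(\theta_k(\theta_0) - \theta_0\big)\big\|^2$ is differentiable, and its gradient has the closed form $\nabla F(\theta_0) = \lambda\, H^2\big(\theta_0 - \theta_k(\theta_0)\big)$ for every $\theta_0 \in E$; in particular no second-order derivatives of $L$ appear in the meta-gradient. -/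

import Mathlib

open scoped RealInnerProductSpace
open InnerProductSpace

/-- Closed-form meta-gradient: if the differentiable adaptation map `θₖ : E → E`
satisfies the inner-loop first-order optimality condition
`∇L(θₖ(θ₀)) + λ H² (θₖ(θ₀) - θ₀) = 0` for every `θ₀`, then the meta-objective
`F(θ₀) = L(θₖ(θ₀)) + (λ/2) ‖H (θₖ(θ₀) - θ₀)‖²` is differentiable with gradient
`∇F(θ₀) = λ H² (θ₀ - θₖ(θ₀))`. -/
theorem meta_gradient_closed_form
    {E : Type*} [NormedAddCommGroup E] [InnerProductSpace ℝ E] [FiniteDimensional ℝ E]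
    (L : E → ℝ) (hL : Differentiable ℝ L)
    (H : E →L[ℝ] E) (hH : ∀ x y : E, ⟪H x, y⟫ = ⟪x, H y⟫)
    (lam : ℝ)
    (θk : E → E) (hθk : Differentiable ℝ θk)
    (hopt : ∀ θ₀ : E, gradient L (θk θ₀) + lam • H (H (θk θ₀ - θ₀)) = 0)
    (F : E → ℝ)
    (hF : ∀ θ₀ : E, F θ₀ = L (θk θ₀) + lam / 2 * ‖H (θk θ₀ - θ₀)‖ ^ 2) :
    Differentiable ℝ F ∧ ∀ θ₀ : E, gradient F θ₀ = lam • H (H (θ₀ - θk θ₀)) := by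
  have key : ∀ θ₀ : E, HasGradientAt F (lam • H (H (θ₀ - θk θ₀))) θ₀ := by
    intro θ₀
    set D := fderiv ℝ θk θ₀ with hDdef
    have hD : HasFDerivAt θk D θ₀ := (hθk θ₀).hasFDerivAt
    have hg : HasFDerivAt (fun x => θk x - x) (D - ContinuousLinearMap.id ℝ E) θ₀ :=
      hD.sub (hasFDerivAt_id θ₀)
    have hHg : HasFDerivAt (fun x => H (θk x - x))
        (H.comp (D - ContinuousLinearMap.id ℝ E)) θ₀ :=
      (H.hasFDerivAt).comp θ₀ hg
    have hinner := hHg.inner ℝ hHg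
    have hLf : HasFDerivAt L ((toDual ℝ E) (gradient L (θk θ₀))) (θk θ₀) :=
      (hL (θk θ₀)).hasGradientAt.hasFDerivAt
    have hLc : HasFDerivAt (fun x => L (θk x))
        (((toDual ℝ E) (gradient L (θk θ₀))).comp D) θ₀ := hLf.comp θ₀ hD
    have hFt : HasFDerivAt F
        ((((toDual ℝ E) (gradient L (θk θ₀))).comp D) +
          (lam / 2) • ((fderivInnerCLM ℝ (H (θk θ₀ - θ₀), H (θk θ₀ - θ₀))).comp
            ((H.comp (D - ContinuousLinearMap.id ℝ E)).prod
             (H.comp (D - ContinuousLinearMap.id ℝ E))))) θ₀ := by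
      have : F = fun x => L (θk x) + lam / 2 * ⟪H (θk x - x), H (θk x - x)⟫ := by
        funext x
        rw [hF x, real_inner_self_eq_norm_sq]
      rw [this]
      exact hLc.add (hinner.const_smul (lam / 2))
    rw [hasGradientAt_iff_hasFDerivAt]
    refine hFt.congr_fderiv (Eq.symm ?_)
    apply ContinuousLinearMap.ext
    intro v
    have hgrad : gradient L (θk θ₀) = -(lam • H (H (θk θ₀ - θ₀))) :=
      eq_neg_of_add_eq_zero_left (hopt θ₀)
    simp only [ContinuousLinearMap.add_apply, ContinuousLinearMap.comp_apply,
      ContinuousLinearMap.smul_apply, ContinuousLinearMap.prod_apply,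
      ContinuousLinearMap.sub_apply, ContinuousLinearMap.coe_id', id_eq,
      toDual_apply_apply, fderivInnerCLM_apply, hgrad]
    have hswap : ∀ a b : E, ⟪a, H (H b)⟫ = ⟪b, H (H a)⟫ := fun a b => by
      rw [← hH, ← hH]; exact real_inner_comm _ _
    simp only [inner_neg_left, real_inner_smul_left, map_sub, inner_sub_left, inner_sub_right,
      smul_eq_mul, hH]
    rw [hswap (D v) (θk θ₀), hswap (D v) θ₀, hswap v (θk θ₀), hswap v θ₀]
    ring
  refine ⟨fun θ₀ => (key θ₀).differentiableAt, fun θ₀ => (key θ₀).gradient⟩
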